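/- arXiv:1510.00657 — 8 statements merged into one kernel-verified Lean document; each statement's English description precedes it below -/
import Mathlib

section
/- For every positive integer m, the noncommutative elementary and complete homogeneous symmetric functions satisfy the identity h_m(u) - h_{m-1}(u)e_1(u) + h_{m-2}(u)e_2(u) - ... + (-1)^m e_m(u) = 0 in the free associative ring Z⟨u_1,...,u_N⟩. -/
/-- Noncommutative elementary symmetric function `e_k(u)` (over all of `{1,…,N}`). -/
noncomputable def ncElem (N : ℕ) (k : ℤ) (S : Finset (Fin N)) : FreeAlgebra ℤ (Fin N) :=
  if k < 0 then 0 else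
  ∑ T ∈ S.powersetCard k.toNat, (((T.sort (· ≤ ·)).reverse).map (FreeAlgebra.ι ℤ)).prod

/-- Noncommutative complete homogeneous symmetric function `h_ℓ(u)`:
the sum over weakly increasing sequences `i_1 ≤ ⋯ ≤ i_ℓ` in `{1,…,N}`
of `u_{i_1} ⋯ u_{i_ℓ}`. -/
noncomputable def ncComplete (N : ℕ) (l : ℕ) : FreeAlgebra ℤ (Fin N) :=
  ∑ f ∈ Finset.univ.filter (fun f : Fin l → Fin N => ∀ i j : Fin l, i ≤ j → f i ≤ f j),
    ((List.ofFn f).map (FreeAlgebra.ι ℤ)).prod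

/-- generator `u_n` (or `0` if out of range). -/
noncomputable def gen (N n : ℕ) : FreeAlgebra ℤ (Fin N) :=
  if h : n < N then FreeAlgebra.ι ℤ ⟨n, h⟩ else 0

noncomputable def E (N : ℕ) : ℕ → ℕ → FreeAlgebra ℤ (Fin N)
  | _, 0 => 1
  | 0, _+1 => 0
  | n+1, k+1 => gen N n * E N n k + E N n (k+1)

noncomputable def H (N : ℕ) : ℕ → ℕ → FreeAlgebra ℤ (Fin N)
  | _, 0 => 1
  | 0, _+1 => 0
  | n+1, l+1 => H N n (l+1) + H N (n+1) l * gen N n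
  termination_by n l => (n, l)

lemma E_zero (N n : ℕ) : E N n 0 = 1 := by cases n <;> rfl
lemma E_nil (N k : ℕ) : E N 0 (k+1) = 0 := rfl
lemma E_succ (N n k : ℕ) : E N (n+1) (k+1) = gen N n * E N n k + E N n (k+1) := rfl
lemma H_zero (N n : ℕ) : H N n 0 = 1 := by cases n <;> (rw [H])
lemma H_nil (N l : ℕ) : H N 0 (l+1) = 0 := by rw [H]
lemma H_succ (N n l : ℕ) : H N (n+1) (l+1) = H N n (l+1) + H N (n+1) l * gen N n := by rw [H]

lemma key (N : ℕ) (n : ℕ) : ∀ m : ℕ, 1 ≤ m →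
    ∑ k ∈ Finset.range (m + 1), ((-1 : ℤ) ^ k) • (H N n (m - k) * E N n k) = 0 := by
  induction n with
  | zero =>
    intro m hm
    apply Finset.sum_eq_zero
    intro k hk
    simp only [Finset.mem_range] at hk
    by_cases hkm : k = m
    · subst hkm
      obtain ⟨m', rfl⟩ : ∃ m', k = m' + 1 := ⟨k - 1, by omega⟩
      simp [Nat.sub_self, H_zero, E_nil]
    · obtain ⟨j, hj⟩ : ∃ j, m - k = j + 1 := ⟨m - k - 1, by omega⟩
      rw [hj, H_nil]
      simp
  | succ n ih =>
    intro m hm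
    set B : ℕ → FreeAlgebra ℤ (Fin N) :=
      fun k => ((-1 : ℤ) ^ k) • (H N (n+1) (m - 1 - k) * gen N n * E N n k) with hB
    have expand : ∀ k ∈ Finset.range (m + 1),
        ((-1 : ℤ) ^ k) • (H N (n+1) (m - k) * E N (n+1) k)
          = ((-1 : ℤ) ^ k) • (H N n (m - k) * E N n k)
            + (if k < m then B k else 0)
            + (if k = 0 then 0 else - B (k - 1)) := by
      intro k hk
      simp only [Finset.mem_range] at hk
      match k with
      | 0 =>
        obtain ⟨m', rfl⟩ : ∃ m', m = m' + 1 := ⟨m - 1, by omega⟩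
        rw [if_pos (by omega : 0 < m' + 1), if_pos rfl, add_zero]
        simp only [hB, pow_zero, one_smul, Nat.sub_zero, E_zero, mul_one, Nat.add_sub_cancel,
          H_succ]
      | (k' + 1) =>
        have hne : k' + 1 ≠ 0 := Nat.succ_ne_zero k'
        rw [if_neg hne, Nat.add_sub_cancel]
        by_cases hkm : k' + 1 < m
        · obtain ⟨j, hj⟩ : ∃ j, m - (k'+1) = j + 1 := ⟨m - (k'+1) - 1, by omega⟩
          have h3 : m - 1 - k' = j + 1 := by omega
          rw [if_pos hkm]
          have h2 : m - 1 - (k'+1) = j := by omega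
          simp only [hB, hj, h2, h3, E_succ, H_succ, pow_succ]
          simp only [mul_add, add_mul, smul_add, mul_assoc, mul_neg_one, neg_smul, smul_neg]
          abel
        · have hkm' : k' + 1 = m := by omega
          subst hkm'
          have h3 : k' + 1 - 1 - k' = 0 := by omega
          rw [if_neg (lt_irrefl _), Nat.sub_self]
          simp only [hB, h3, E_succ, H_zero, E_zero, mul_one, one_mul, pow_succ]
          simp only [mul_add, add_mul, smul_add, mul_assoc, mul_neg_one, neg_smul, smul_neg]
          abel
    rw [Finset.sum_congr rfl expand]
    rw [Finset.sum_add_distrib, Finset.sum_add_distrib, ih m hm, zero_add]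
    rw [Finset.sum_range_succ, if_neg (lt_irrefl m), add_zero]
    rw [Finset.sum_congr rfl (fun k hk => if_pos (Finset.mem_range.mp hk))]
    rw [Finset.sum_range_succ' _ m, if_pos rfl, add_zero]
    simp only [Nat.add_sub_cancel, if_neg (Nat.succ_ne_zero _)]
    rw [← Finset.sum_add_distrib]
    apply Finset.sum_eq_zero
    intro k _
    simp [hB]

lemma sort_insert_max {N : ℕ} (a : Fin N) (T : Finset (Fin N))
    (h1 : ∀ b ∈ T, b < a) (h2 : a ∉ T) :
    (insert a T).sort (· ≤ ·) = T.sort (· ≤ ·) ++ [a] := by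
  have hperm : List.Perm ((insert a T).sort (· ≤ ·)) (T.sort (· ≤ ·) ++ [a]) :=
    (Finset.sort_perm_toList _ _).trans ((Finset.toList_insert h2).trans
      (((Finset.sort_perm_toList _ _).symm.cons a).trans
        (List.perm_append_singleton a _).symm))
  refine List.Perm.eq_of_pairwise' (r := (· ≤ ·)) (Finset.pairwise_sort _ _) ?_ hperm
  rw [List.pairwise_append]
  refine ⟨Finset.pairwise_sort _ _, List.pairwise_singleton _ a, ?_⟩
  intro b hb c hc
  rw [List.mem_singleton] at hc
  subst hc
  exact (h1 b ((Finset.mem_sort _).mp hb)).le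

lemma elem_bridge (N : ℕ) : ∀ n, n ≤ N → ∀ k : ℕ,
    ∑ T ∈ (Finset.univ.filter (fun i : Fin N => (i : ℕ) < n)).powersetCard k,
      (((T.sort (· ≤ ·)).reverse).map (FreeAlgebra.ι ℤ)).prod = E N n k := by
  intro n
  induction n with
  | zero =>
    intro _ k
    have hempty : (Finset.univ.filter (fun i : Fin N => (i : ℕ) < 0)) = ∅ := by
      apply Finset.filter_eq_empty_iff.mpr
      intro i _
      omega
    rw [hempty]
    match k with
    | 0 => simp [Finset.powersetCard_zero, E_zero]
    | k + 1 =>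
      rw [Finset.powersetCard_eq_empty.mpr (by simp), E_nil, Finset.sum_empty]
  | succ n ih =>
    intro hn k
    have hnN : n < N := hn
    set a : Fin N := ⟨n, hnN⟩ with ha
    have haval : (a : ℕ) = n := rfl
    have hsplit : (Finset.univ.filter (fun i : Fin N => (i : ℕ) < n + 1))
        = insert a (Finset.univ.filter (fun i : Fin N => (i : ℕ) < n)) := by
      ext i
      simp only [Finset.mem_filter, Finset.mem_univ, true_and, Finset.mem_insert]
      constructor
      · intro h
        rcases Nat.lt_succ_iff_lt_or_eq.mp h with h | h
        · exact Or.inr h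
        · exact Or.inl (Fin.ext (by rw [h, haval]))
      · rintro (rfl | h)
        · omega
        · omega
    have hanot : a ∉ Finset.univ.filter (fun i : Fin N => (i : ℕ) < n) := by
      simp [haval]
    rw [hsplit]
    match k with
    | 0 => simp [Finset.powersetCard_zero, E_zero]
    | k + 1 =>
      rw [Finset.powersetCard_succ_insert hanot]
      rw [Finset.sum_union]
      · rw [Finset.sum_image]
        · have hterm : ∀ T ∈ (Finset.univ.filter (fun i : Fin N => (i : ℕ) < n)).powersetCard k,
              ((((insert a T).sort (· ≤ ·)).reverse).map (FreeAlgebra.ι ℤ)).prod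
                = FreeAlgebra.ι ℤ a * (((T.sort (· ≤ ·)).reverse).map (FreeAlgebra.ι ℤ)).prod := by
            intro T hT
            have hTsub := (Finset.mem_powersetCard.mp hT).1
            have h1 : ∀ b ∈ T, b < a := by
              intro b hb
              have hb2 := (Finset.mem_filter.mp (hTsub hb)).2
              rw [Fin.lt_def, haval]
              exact hb2
            have h2 : a ∉ T := fun h => absurd (h1 a h) (lt_irrefl a)
            rw [sort_insert_max a T h1 h2, List.reverse_append, List.reverse_singleton,
              List.singleton_append, List.map_cons, List.prod_cons]
          rw [Finset.sum_congr rfl hterm, ← Finset.mul_sum, ih (by omega) k, ih (by omega) (k+1),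
            E_succ]
          rw [gen, dif_pos hnN, ← ha]
          exact add_comm _ _
        · intro T₁ h₁ T₂ h₂ hins
          have hs₁ := (Finset.mem_powersetCard.mp h₁).1
          have hs₂ := (Finset.mem_powersetCard.mp h₂).1
          have hn₁ : a ∉ T₁ := fun h => by
            have := (Finset.mem_filter.mp (hs₁ h)).2; omega
          have hn₂ : a ∉ T₂ := fun h => by
            have := (Finset.mem_filter.mp (hs₂ h)).2; omega
          rw [← Finset.erase_insert hn₁, ← Finset.erase_insert hn₂, hins]
      · rw [Finset.disjoint_left]
        intro T hT hT2
        have hTsub := (Finset.mem_powersetCard.mp hT).1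
        obtain ⟨T2, hT2m, rfl⟩ := Finset.mem_image.mp hT2
        have hmem : a ∈ insert a T2 := Finset.mem_insert_self a T2
        have := (Finset.mem_filter.mp (hTsub hmem)).2
        omega

lemma complete_bridge_aux (N : ℕ) : ∀ s n l : ℕ, n + l ≤ s → n ≤ N →
    ∑ f ∈ Finset.univ.filter (fun f : Fin l → Fin N =>
        (∀ i j : Fin l, i ≤ j → f i ≤ f j) ∧ ∀ i, (f i : ℕ) < n),
      ((List.ofFn f).map (FreeAlgebra.ι ℤ)).prod = H N n l := by
  intro s
  induction s with
  | zero =>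
    intro n l hs _
    obtain ⟨rfl, rfl⟩ : n = 0 ∧ l = 0 := by omega
    rw [H_zero]
    rw [Finset.filter_true_of_mem (fun f _ => ⟨fun i => i.elim0, fun i => i.elim0⟩)]
    simp [List.ofFn_zero]
  | succ s ih =>
    intro n l hs hn
    match n, l with
    | n, 0 =>
      rw [H_zero]
      rw [Finset.filter_true_of_mem (fun f _ => ⟨fun i => i.elim0, fun i => i.elim0⟩)]
      simp [List.ofFn_zero]
    | 0, l + 1 =>
      rw [H_nil]
      rw [Finset.filter_eq_empty_iff.mpr, Finset.sum_empty]
      rintro f - ⟨-, hb⟩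
      exact absurd (hb ⟨0, Nat.succ_pos l⟩) (by omega)
    | n + 1, l + 1 =>
      have hnN : n < N := hn
      set a : Fin N := ⟨n, hnN⟩ with ha
      have haval : (a : ℕ) = n := rfl
      set A := Finset.univ.filter (fun f : Fin (l+1) → Fin N =>
        (∀ i j : Fin (l+1), i ≤ j → f i ≤ f j) ∧ ∀ i, (f i : ℕ) < n + 1) with hA
      rw [← Finset.sum_filter_add_sum_filter_not A (fun f => f (Fin.last l) = a)]
      have piece2 : A.filter (fun f => ¬ f (Fin.last l) = a)
          = Finset.univ.filter (fun f : Fin (l+1) → Fin N =>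
              (∀ i j : Fin (l+1), i ≤ j → f i ≤ f j) ∧ ∀ i, (f i : ℕ) < n) := by
        ext f
        simp only [hA, Finset.mem_filter, Finset.mem_univ, true_and]
        constructor
        · rintro ⟨⟨hmono, hbound⟩, hne⟩
          refine ⟨hmono, fun i => ?_⟩
          have h1 : (f i : ℕ) ≤ (f (Fin.last l) : ℕ) :=
            Fin.le_def.mp (hmono i (Fin.last l) (Fin.le_last i))
          have h2 : (f (Fin.last l) : ℕ) < n + 1 := hbound _
          have h3 : (f (Fin.last l) : ℕ) ≠ n := fun h => hne (Fin.ext (by rw [h, haval]))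
          omega
        · rintro ⟨hmono, hbound⟩
          refine ⟨⟨hmono, fun i => (hbound i).trans (Nat.lt_succ_self n)⟩, fun h => ?_⟩
          have := hbound (Fin.last l)
          rw [h, haval] at this
          omega
      have piece1 : ∑ f ∈ A.filter (fun f => f (Fin.last l) = a),
            ((List.ofFn f).map (FreeAlgebra.ι ℤ)).prod
          = (∑ g ∈ Finset.univ.filter (fun g : Fin l → Fin N =>
              (∀ i j : Fin l, i ≤ j → g i ≤ g j) ∧ ∀ i, (g i : ℕ) < n + 1),
              ((List.ofFn g).map (FreeAlgebra.ι ℤ)).prod) * FreeAlgebra.ι ℤ a := by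
        rw [Finset.sum_mul]
        refine Finset.sum_nbij' (fun f => Fin.init f) (fun g => Fin.snoc g a) ?_ ?_ ?_ ?_ ?_
        · rintro f hf
          simp only [hA, Finset.mem_filter, Finset.mem_univ, true_and] at hf ⊢
          obtain ⟨⟨hmono, hbound⟩, hlast⟩ := hf
          refine ⟨fun i j hij => ?_, fun i => hbound _⟩
          exact hmono _ _ (Fin.castSucc_le_castSucc_iff.mpr hij)
        · rintro g hg
          simp only [hA, Finset.mem_filter, Finset.mem_univ, true_and] at hg ⊢
          obtain ⟨hmono, hbound⟩ := hg
          refine ⟨⟨fun i j hij => ?_, fun i => ?_⟩, Fin.snoc_last ..⟩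
          · rcases Fin.eq_castSucc_or_eq_last j with ⟨j', rfl⟩ | rfl
            · rcases Fin.eq_castSucc_or_eq_last i with ⟨i', rfl⟩ | rfl
              · rw [Fin.snoc_castSucc, Fin.snoc_castSucc]
                exact hmono i' j' (Fin.castSucc_le_castSucc_iff.mp hij)
              · exact absurd (lt_of_le_of_lt hij (Fin.castSucc_lt_last j')) (lt_irrefl _)
            · rw [Fin.snoc_last]
              rcases Fin.eq_castSucc_or_eq_last i with ⟨i', rfl⟩ | rfl
              · rw [Fin.snoc_castSucc, Fin.le_def, haval]
                have := hbound i'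
                omega
              · rw [Fin.snoc_last]
          · rcases Fin.eq_castSucc_or_eq_last i with ⟨i', rfl⟩ | rfl
            · rw [Fin.snoc_castSucc]
              exact hbound i'
            · rw [Fin.snoc_last, haval]
              omega
        · rintro f hf
          simp only [hA, Finset.mem_filter] at hf
          rw [← hf.2]
          exact Fin.snoc_init_self f
        · rintro g _
          simp
        · rintro f hf
          simp only [hA, Finset.mem_filter] at hf
          rw [List.ofFn_succ', List.concat_eq_append, List.map_append, List.prod_append]
          have : (fun i => f (Fin.castSucc i)) = Fin.init f := rfl
          rw [this, hf.2]
          simp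
      rw [piece1, piece2, H_succ, ih n (l+1) (by omega) (by omega),
        ih (n+1) l (by omega) (by omega), gen, dif_pos hnN, ← ha]
      exact add_comm _ _

lemma ncElem_eq (N k : ℕ) : ncElem N (k : ℤ) Finset.univ = E N N k := by
  unfold ncElem
  rw [if_neg (by exact not_lt.mpr (Int.natCast_nonneg k)), Int.toNat_natCast]
  rw [← elem_bridge N N le_rfl k]
  congr 1
  rw [Finset.filter_true_of_mem (fun i _ => i.isLt)]

lemma ncComplete_eq (N l : ℕ) : ncComplete N l = H N N l := by
  rw [← complete_bridge_aux N (N + l) N l le_rfl le_rfl]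
  unfold ncComplete
  apply Finset.sum_congr
  · apply Finset.filter_congr
    intro f _
    exact (and_iff_left (fun i => (f i).isLt)).symm
  · intros; rfl


/-- `h_m - h_{m-1} e_1 + h_{m-2} e_2 - ⋯ + (-1)^m e_m = 0` for every `m > 0`. -/
theorem stmt2 (N : ℕ) (m : ℕ) (hm : 0 < m) :
    ∑ k ∈ Finset.range (m + 1),
        ((-1 : ℤ) ^ k) • (ncComplete N (m - k) * ncElem N (k : ℤ) Finset.univ) = 0 := by
  rw [Finset.sum_congr rfl (fun k _ => by rw [ncComplete_eq, ncElem_eq])]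
  exact key N N m hm
end

section
/- Let I be a two-sided ideal of U = Z⟨u_1,...,u_N⟩ such that all noncommutative elementary symmetric functions e_k(u) pairwise commute modulo I. Then all noncommutative complete homogeneous symmetric functions h_ℓ(u) pairwise commute modulo I. -/
namespace Stmt3Aux

open Finset

noncomputable def word {N m : ℕ} (w : Fin m → Fin N) : FreeAlgebra ℤ (Fin N) :=
  ((List.ofFn w).map (FreeAlgebra.ι ℤ)).prod

noncomputable def E (N k : ℕ) : FreeAlgebra ℤ (Fin N) :=
  ∑ f ∈ Finset.univ.filter (fun f : Fin k → Fin N => ∀ i j : Fin k, i < j → f j < f i), word f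

lemma ncElem_eq (N k : ℕ) : ncElem N (k : ℤ) Finset.univ = E N k := by
  rw [ncElem, if_neg (not_lt.mpr (Int.natCast_nonneg k)), E]
  rw [show ((k : ℤ).toNat) = k from Int.toNat_natCast k]
  refine Finset.sum_bij (fun T hT => fun j : Fin k =>
      T.orderEmbOfFin (by simpa using (Finset.mem_powersetCard.mp hT).2) j.rev) ?_ ?_ ?_ ?_
  · intro T hT
    simp only [Finset.mem_filter, Finset.mem_univ, true_and]
    intro i j hij
    exact (T.orderEmbOfFin _).strictMono (Fin.rev_lt_rev.mpr hij)
  · intro T hT T' hT' h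
    have key : ∀ (S : Finset (Fin N)) (hS : S ∈ Finset.powersetCard k Finset.univ),
        (S : Set (Fin N)) = Set.range (fun j : Fin k =>
          S.orderEmbOfFin (by simpa using (Finset.mem_powersetCard.mp hS).2) j.rev) := by
      intro S hS
      rw [← Finset.range_orderEmbOfFin S (by simpa using (Finset.mem_powersetCard.mp hS).2)]
      ext x
      constructor
      · rintro ⟨j, rfl⟩
        exact ⟨j.rev, by simp⟩
      · rintro ⟨j, rfl⟩
        exact ⟨j.rev, rfl⟩
    apply Finset.coe_injective
    rw [key T hT, key T' hT']
    exact congrArg Set.range h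
  · intro g hg
    simp only [Finset.mem_filter, Finset.mem_univ, true_and] at hg
    have hanti : StrictAnti g := fun a b h => hg a b h
    have hginj : Function.Injective g := hanti.injective
    refine ⟨Finset.image g Finset.univ, ?_, ?_⟩
    · simp [Finset.mem_powersetCard, Finset.card_image_of_injective _ hginj]
    · have hcard : (Finset.image g Finset.univ).card = k := by
        rw [Finset.card_image_of_injective _ hginj, Finset.card_univ, Fintype.card_fin]
      have hmono : StrictMono (fun j : Fin k => g j.rev) := by
        intro a b hab
        exact hg _ _ (Fin.rev_lt_rev.mpr hab)
      have huniq := Finset.orderEmbOfFin_unique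
        (f := fun j : Fin k => g j.rev) hcard (fun x => Finset.mem_image_of_mem g (Finset.mem_univ _)) hmono
      funext j
      beta_reduce
      rw [← huniq]
      simp [Fin.rev_rev]
  · intro T hT
    have hc : T.card = k := by simpa using (Finset.mem_powersetCard.mp hT).2
    unfold word
    have : List.ofFn (fun j : Fin k => T.orderEmbOfFin hc j.rev) = (T.sort (· ≤ ·)).reverse := by
      apply List.ext_getElem
      · simp [Finset.length_sort, hc]
      · intro i h1 h2
        simp only [List.getElem_ofFn, List.getElem_reverse]
        rw [Finset.orderEmbOfFin_apply]
        simp only [Fin.getElem_fin, Fin.val_rev]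
        have hidx : k - (i + 1) = (T.sort (fun x1 x2 => x1 ≤ x2)).length - 1 - i := by
          rw [Finset.length_sort, hc]
          omega
        simp only [hidx]
    rw [this]

def cond {α : Type*} [LinearOrder α] (m p : ℕ) (v : ℕ → α) : Prop :=
  (∀ i, i + 1 < p → v i ≤ v (i + 1)) ∧ (∀ i, p ≤ i → i + 1 < m → v (i + 1) < v i)

lemma chain_le {α : Type*} [Preorder α] (p : ℕ) (v : ℕ → α)
    (h : ∀ i, i + 1 < p → v i ≤ v (i + 1)) :
    ∀ i j, i ≤ j → j < p → v i ≤ v j := by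
  intro i j hij hj
  induction j, hij using Nat.le_induction with
  | base => exact le_rfl
  | succ n hn ih => exact le_trans (ih (by omega)) (h n hj)

lemma chain_lt {α : Type*} [Preorder α] (m p : ℕ) (v : ℕ → α)
    (h : ∀ i, p ≤ i → i + 1 < m → v (i + 1) < v i) :
    ∀ i j, p ≤ i → i < j → j < m → v j < v i := by
  intro i j hpi hij hj
  induction j, hij using Nat.le_induction with
  | base => exact h i hpi hj
  | succ n hn ih => exact lt_trans (h n (by omega) (by omega)) (ih (by omega))

def ext {N m : ℕ} (hm : 0 < m) (w : Fin m → Fin N) : ℕ → Fin N :=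
  fun i => w ⟨min i (m - 1), by omega⟩

lemma ext_lt {N m : ℕ} (hm : 0 < m) (w : Fin m → Fin N) {i : ℕ} (h : i < m) :
    ext hm w i = w ⟨i, h⟩ := by
  unfold ext
  congr 1
  exact Fin.ext (by simp; omega)

def glue {N m p : ℕ} (hp : p ≤ m) (f : Fin p → Fin N) (g : Fin (m - p) → Fin N) :
    Fin m → Fin N :=
  fun i => if h : (i : ℕ) < p then f ⟨i, h⟩ else g ⟨(i : ℕ) - p, by omega⟩

lemma word_glue {N m p : ℕ} (hp : p ≤ m) (f : Fin p → Fin N) (g : Fin (m - p) → Fin N) :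
    word (glue hp f g) = word f * word g := by
  have hlist : List.ofFn (glue hp f g) = List.ofFn f ++ List.ofFn g := by
    apply List.ext_getElem
    · simp only [List.length_ofFn, List.length_append]
      omega
    · intro i h1 h2
      rw [List.getElem_ofFn]
      by_cases h : i < p
      · rw [List.getElem_append_left (by simpa using h), List.getElem_ofFn]
        exact dif_pos h
      · rw [List.getElem_append_right (by simpa using h), List.getElem_ofFn]
        refine (dif_neg (by simpa using h)).trans (congrArg g (Fin.ext ?_))
        show i - p = i - (List.ofFn f).length
        rw [List.length_ofFn]
  unfold word
  rw [hlist, List.map_append, List.prod_append]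

open scoped Classical in
lemma prod_eq (N m p : ℕ) (hm : 0 < m) (hp : p ≤ m) :
    ncComplete N p * E N (m - p)
      = ∑ w ∈ Finset.univ.filter (fun w : Fin m → Fin N => cond m p (ext hm w)), word w := by
  rw [ncComplete, E, Finset.sum_mul_sum, ← Finset.sum_product']
  refine Finset.sum_bij (fun fg _ => glue hp fg.1 fg.2) ?_ ?_ ?_ ?_
  · rintro ⟨f, g⟩ hfg
    simp only [Finset.mem_product, Finset.mem_filter, Finset.mem_univ, true_and] at hfg
    obtain ⟨hf, hg⟩ := hfg
    simp only [Finset.mem_filter, Finset.mem_univ, true_and]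
    constructor
    · intro i hi
      rw [ext_lt hm _ (by omega), ext_lt hm _ (by omega)]
      unfold glue
      rw [dif_pos (show i < p by omega), dif_pos (show i + 1 < p by simpa using hi)]
      exact hf _ _ (by simp)
    · intro i hpi hi
      rw [ext_lt hm _ (by omega), ext_lt hm _ (by omega)]
      unfold glue
      rw [dif_neg (by simp; omega), dif_neg (by simp; omega)]
      exact hg _ _ (by simp; omega)
  · rintro ⟨f, g⟩ hfg ⟨f', g'⟩ hfg' h
    have hglue : glue hp f g = glue hp f' g' := h
    have hf : f = f' := by
      funext a
      have h2 := congrFun hglue ⟨(a : ℕ), by omega⟩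
      unfold glue at h2
      rw [dif_pos (by exact a.2), dif_pos (by exact a.2)] at h2
      simpa using h2
    have hg : g = g' := by
      funext b
      have hb : (b : ℕ) + p < m := by omega
      have h2 := congrFun hglue ⟨(b : ℕ) + p, hb⟩
      unfold glue at h2
      rw [dif_neg (by simp), dif_neg (by simp)] at h2
      simpa using h2
    simp [hf, hg]
  · intro w hw
    simp only [Finset.mem_filter, Finset.mem_univ, true_and] at hw
    obtain ⟨hA, hD⟩ := hw
    refine ⟨(fun a : Fin p => w ⟨a, by omega⟩, fun b : Fin (m - p) => w ⟨p + b, by omega⟩),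
      ?_, ?_⟩
    · simp only [Finset.mem_product, Finset.mem_filter, Finset.mem_univ, true_and]
      constructor
      · intro a b hab
        have := chain_le p (ext hm w) hA a b hab b.2
        rw [ext_lt hm w (by omega), ext_lt hm w (by omega)] at this
        exact this
      · intro a b hab
        have := chain_lt m p (ext hm w) hD (p + a) (p + b) (by omega) (by omega) (by omega)
        rw [ext_lt hm w (by omega), ext_lt hm w (by omega)] at this
        exact this
    · show glue hp _ _ = w
      funext i
      unfold glue
      by_cases h : (i : ℕ) < p
      · rw [dif_pos h]
      · rw [dif_neg h]
        refine congrArg w (Fin.ext ?_)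
        show p + ((i : ℕ) - p) = (i : ℕ)
        omega
  · rintro ⟨f, g⟩ hfg
    exact (word_glue hp f g).symm

open scoped Classical in
lemma cancel {α : Type*} [LinearOrder α] (m : ℕ) (hm : 0 < m) (v : ℕ → α) :
    ∑ p ∈ (Finset.range (m + 1)).filter (fun p => cond m p v), ((-1 : ℤ)) ^ (m - p) = 0 := by
  classical
  apply Finset.sum_involution
    (g := fun p _ => if p = m then m - 1 else if 0 < p ∧ v p < v (p - 1) then p - 1 else p + 1)
  · -- f a + f (g a) = 0
    intro p hp
    simp only [Finset.mem_filter, Finset.mem_range] at hp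
    obtain ⟨hpm, hc⟩ := hp
    by_cases h1 : p = m
    · rw [if_pos h1, h1]
      have e1 : m - (m - 1) = 1 := by omega
      rw [e1, Nat.sub_self]
      ring
    · rw [if_neg h1]
      by_cases h2 : 0 < p ∧ v p < v (p - 1)
      · rw [if_pos h2]
        have : m - (p - 1) = (m - p) + 1 := by omega
        rw [this]; ring
      · rw [if_neg h2]
        have : m - p = (m - (p + 1)) + 1 := by omega
        rw [this]; ring
  · -- g a ≠ a
    intro p hp _
    simp only [Finset.mem_filter, Finset.mem_range] at hp
    split_ifs with h1 h2 <;> omega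
  · -- g a ∈ s
    intro p hp
    simp only [Finset.mem_filter, Finset.mem_range] at hp ⊢
    obtain ⟨hpm, hA, hD⟩ := hp
    by_cases h1 : p = m
    · rw [if_pos h1]

      refine ⟨by omega, fun i hi => hA i (by omega), fun i hi hi' => by omega⟩
    · rw [if_neg h1]
      by_cases h2 : 0 < p ∧ v p < v (p - 1)
      · rw [if_pos h2]
        refine ⟨by omega, fun i hi => hA i (by omega), fun i hi hi' => ?_⟩
        rcases Nat.eq_or_lt_of_le hi with h | h
        · have : i + 1 = p := by omega
          rw [this]
          have : i = p - 1 := by omega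
          rw [this]; exact h2.2
        · exact hD i (by omega) hi'
      · rw [if_neg h2]
        refine ⟨by omega, fun i hi => ?_, fun i hi hi' => hD i (by omega) hi'⟩
        rcases Nat.lt_or_ge (i + 1) p with h | h
        · exact hA i h
        · have hip : i + 1 = p := by omega
          have hp0 : 0 < p := by omega
          have := h2
          push_neg at this
          have := this hp0
          have hi' : i = p - 1 := by omega
          subst hi'
          have hpp : p - 1 + 1 = p := by omega
          rw [hpp]
          exact le_of_not_gt (by simpa using this)
  · -- involution
    intro p hp
    simp only [Finset.mem_filter, Finset.mem_range] at hp
    obtain ⟨hpm, hA, hD⟩ := hp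
    by_cases h1 : p = m
    · rw [if_pos h1]

      have hmm : ¬ (m - 1 = m) := by omega
      rw [if_neg hmm]
      have : ¬ (0 < m - 1 ∧ v (m - 1) < v (m - 1 - 1)) := by
        rintro ⟨h3, h4⟩
        exact absurd (hA (m - 1 - 1) (by omega)) (by
          have : m - 1 - 1 + 1 = m - 1 := by omega
          rw [this]; exact not_le_of_gt h4)
      rw [if_neg this]
      omega
    · rw [if_neg h1]
      by_cases h2 : 0 < p ∧ v p < v (p - 1)
      · rw [if_pos h2]
        have h3 : ¬ (p - 1 = m) := by omega
        rw [if_neg h3]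
        have : ¬ (0 < p - 1 ∧ v (p - 1) < v (p - 1 - 1)) := by
          rintro ⟨h4, h5⟩
          exact absurd (hA (p - 1 - 1) (by omega)) (by
            have : p - 1 - 1 + 1 = p - 1 := by omega
            rw [this]; exact not_le_of_gt h5)
        rw [if_neg this]
        omega
      · rw [if_neg h2]
        by_cases h3 : p + 1 = m
        · rw [if_pos h3]; omega
        · rw [if_neg h3]
          have : 0 < p + 1 ∧ v (p + 1) < v (p + 1 - 1) := by
            refine ⟨by omega, ?_⟩
            have : p + 1 - 1 = p := by omega
            rw [this]
            exact hD p le_rfl (by omega)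
          rw [if_pos this]
          omega

lemma recursion (N m : ℕ) (hm : 0 < m) :
    ∑ p ∈ Finset.range (m + 1), ((-1 : ℤ)) ^ (m - p) • (ncComplete N p * E N (m - p)) = 0 := by
  classical
  have step : ∀ p ∈ Finset.range (m + 1),
      ((-1 : ℤ)) ^ (m - p) • (ncComplete N p * E N (m - p))
        = ∑ w : Fin m → Fin N,
            if cond m p (ext hm w) then ((-1 : ℤ)) ^ (m - p) • word w else 0 := by
    intro p hp
    rw [prod_eq N m p hm (by simpa using Nat.lt_succ_iff.mp (Finset.mem_range.mp hp)),
      Finset.smul_sum, Finset.sum_filter]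
  rw [Finset.sum_congr rfl step, Finset.sum_comm]
  refine Finset.sum_eq_zero fun w _ => ?_
  have : ∑ p ∈ Finset.range (m + 1),
      (if cond m p (ext hm w) then ((-1 : ℤ)) ^ (m - p) • word w else 0)
      = ∑ p ∈ (Finset.range (m + 1)).filter (fun p => cond m p (ext hm w)),
          ((-1 : ℤ)) ^ (m - p) • word w := (Finset.sum_filter _ _).symm
  rw [this, ← Finset.sum_smul, cancel m hm (ext hm w), zero_smul]

lemma E_zero (N : ℕ) : E N 0 = 1 := by
  rw [E, Finset.filter_true_of_mem (fun f _ i j h => absurd i.2 (by omega))]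
  rw [Finset.univ_unique, Finset.sum_singleton]
  simp [word]

lemma ncComplete_zero (N : ℕ) : ncComplete N 0 = 1 := by
  rw [ncComplete, Finset.filter_true_of_mem (fun f _ i j h => absurd i.2 (by omega))]
  rw [Finset.univ_unique, Finset.sum_singleton]
  simp

lemma ncComplete_rec (N m : ℕ) (hm : 0 < m) :
    ncComplete N m
      = ∑ p ∈ Finset.range m, (-((-1 : ℤ)) ^ (m - p)) • (ncComplete N p * E N (m - p)) := by
  have := recursion N m hm
  rw [Finset.sum_range_succ] at this
  simp only [Nat.sub_self, pow_zero, one_smul, E_zero, mul_one] at this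
  have h2 : ncComplete N m
      = -∑ p ∈ Finset.range m, ((-1 : ℤ)) ^ (m - p) • (ncComplete N p * E N (m - p)) :=
    eq_neg_of_add_eq_zero_right this
  rw [h2, ← Finset.sum_neg_distrib]
  exact Finset.sum_congr rfl fun p _ => by rw [neg_smul]


section Quotient

variable {N : ℕ} (I : TwoSidedIdeal (FreeAlgebra ℤ (Fin N)))

noncomputable def pi : FreeAlgebra ℤ (Fin N) →+* I.ringCon.Quotient := I.ringCon.mk'

lemma hbar_rec (m : ℕ) (hm : 0 < m) :
    pi I (ncComplete N m)
      = ∑ p ∈ Finset.range m,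
          (-((-1 : ℤ)) ^ (m - p)) • (pi I (ncComplete N p) * pi I (E N (m - p))) := by
  rw [ncComplete_rec N m hm, map_sum]
  exact Finset.sum_congr rfl fun p _ => by rw [map_zsmul, map_mul]

lemma commute_hE (he : ∀ k l : ℕ, Commute (pi I (E N k)) (pi I (E N l))) :
    ∀ m k : ℕ, Commute (pi I (ncComplete N m)) (pi I (E N k)) := by
  intro m
  induction m using Nat.strong_induction_on with
  | _ m ih =>
    intro k
    rcases Nat.eq_zero_or_pos m with rfl | hm
    · rw [ncComplete_zero, map_one]
      exact Commute.one_left _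
    · rw [hbar_rec I m hm]
      refine Commute.sum_left _ _ _ fun p hp => ?_
      rw [zsmul_eq_mul]
      exact ((Int.cast_commute _ _).mul_left
        (((ih p (Finset.mem_range.mp hp)) k).mul_left (he (m - p) k)))

lemma commute_hh (he : ∀ k l : ℕ, Commute (pi I (E N k)) (pi I (E N l))) :
    ∀ l m : ℕ, Commute (pi I (ncComplete N l)) (pi I (ncComplete N m)) := by
  intro l m
  induction m using Nat.strong_induction_on with
  | _ m ih =>
    rcases Nat.eq_zero_or_pos m with rfl | hm
    · rw [ncComplete_zero, map_one]
      exact Commute.one_right _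
    · rw [hbar_rec I m hm]
      refine Commute.sum_right _ _ _ fun p hp => ?_
      rw [zsmul_eq_mul]
      exact ((Int.cast_commute _ _).symm.mul_right
        ((ih p (Finset.mem_range.mp hp)).mul_right (commute_hE I he l (m - p))))

end Quotient

end Stmt3Aux

/-- If all the `e_k(u)` pairwise commute modulo a two-sided ideal `I`, then all
the `h_ℓ(u)` pairwise commute modulo `I`. -/
theorem stmt3 (N : ℕ) (I : TwoSidedIdeal (FreeAlgebra ℤ (Fin N)))
    (he : ∀ k l : ℕ, ncElem N k Finset.univ * ncElem N l Finset.univ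
        - ncElem N l Finset.univ * ncElem N k Finset.univ ∈ I) :
    ∀ k l : ℕ, ncComplete N k * ncComplete N l - ncComplete N l * ncComplete N k ∈ I := by
  intro k l
  have he' : ∀ k l : ℕ, Commute (Stmt3Aux.pi I (Stmt3Aux.E N k)) (Stmt3Aux.pi I (Stmt3Aux.E N l)) := by
    intro a b
    have h1 := he a b
    rw [Stmt3Aux.ncElem_eq, Stmt3Aux.ncElem_eq] at h1
    have h2 : I.ringCon (Stmt3Aux.E N a * Stmt3Aux.E N b) (Stmt3Aux.E N b * Stmt3Aux.E N a) :=
      (TwoSidedIdeal.rel_iff I _ _).mpr h1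
    have h3 : Stmt3Aux.pi I (Stmt3Aux.E N a * Stmt3Aux.E N b)
        = Stmt3Aux.pi I (Stmt3Aux.E N b * Stmt3Aux.E N a) := Quot.sound h2
    rw [Commute, SemiconjBy, ← map_mul, ← map_mul, h3]
  have hc := Stmt3Aux.commute_hh I he' k l
  rw [Commute, SemiconjBy, ← map_mul, ← map_mul] at hc
  rw [← TwoSidedIdeal.rel_iff I]
  exact Quotient.exact' hc
end

section
/- The ideal I_B of U = Z⟨u_1,...,u_N⟩ generated by the elements u_b²u_a + u_a u_b u_a - u_b u_a u_b - u_b u_a² (for a < b), u_b u_c u_a - u_b u_a u_c (for a < b < c), and u_a u_c u_b - u_c u_a u_b (for a < b < c) contains all elements u_c u_b u_c u_a + u_b u_c u_a u_c - u_c u_b u_a u_c - u_b u_c² u_a for a < b < c. -/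
open FreeAlgebra

/-- Generators of the ideal `I_B`. -/
def genB (N : ℕ) : Set (FreeAlgebra ℤ (Fin N)) :=
  {x | ∃ a b : Fin N, a < b ∧
      x = ι ℤ b * ι ℤ b * ι ℤ a + ι ℤ a * ι ℤ b * ι ℤ a
        - ι ℤ b * ι ℤ a * ι ℤ b - ι ℤ b * ι ℤ a * ι ℤ a} ∪
  {x | ∃ a b c : Fin N, a < b ∧ b < c ∧
      x = ι ℤ b * ι ℤ c * ι ℤ a - ι ℤ b * ι ℤ a * ι ℤ c} ∪
  {x | ∃ a b c : Fin N, a < b ∧ b < c ∧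
      x = ι ℤ a * ι ℤ c * ι ℤ b - ι ℤ c * ι ℤ a * ι ℤ b}

/-- The ideal `I_B` contains the degree-4 elements
`u_c u_b u_c u_a + u_b u_c u_a u_c - u_c u_b u_a u_c - u_b u_c² u_a` for `a < b < c`. -/
theorem stmt4 (N : ℕ) (a b c : Fin N) (hab : a < b) (hbc : b < c) :
    ι ℤ c * ι ℤ b * ι ℤ c * ι ℤ a + ι ℤ b * ι ℤ c * ι ℤ a * ι ℤ c
      - ι ℤ c * ι ℤ b * ι ℤ a * ι ℤ c - ι ℤ b * ι ℤ c * ι ℤ c * ι ℤ a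
      ∈ TwoSidedIdeal.span (genB N) := by
  set I := TwoSidedIdeal.span (genB N)
  have hG2 : ι ℤ b * ι ℤ c * ι ℤ a - ι ℤ b * ι ℤ a * ι ℤ c ∈ I :=
    TwoSidedIdeal.subset_span (Or.inl (Or.inr ⟨a, b, c, hab, hbc, rfl⟩))
  have hG1 : ι ℤ c * ι ℤ c * ι ℤ a + ι ℤ a * ι ℤ c * ι ℤ a
      - ι ℤ c * ι ℤ a * ι ℤ c - ι ℤ c * ι ℤ a * ι ℤ a ∈ I :=
    TwoSidedIdeal.subset_span (Or.inl (Or.inl ⟨a, c, lt_trans hab hbc, rfl⟩))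
  have h1 : ι ℤ c * (ι ℤ b * ι ℤ c * ι ℤ a - ι ℤ b * ι ℤ a * ι ℤ c) ∈ I :=
    I.mul_mem_left _ _ hG2
  have h2 : ι ℤ b * (ι ℤ c * ι ℤ c * ι ℤ a + ι ℤ a * ι ℤ c * ι ℤ a
      - ι ℤ c * ι ℤ a * ι ℤ c - ι ℤ c * ι ℤ a * ι ℤ a) ∈ I :=
    I.mul_mem_left _ _ hG1
  have h3 : (ι ℤ b * ι ℤ c * ι ℤ a - ι ℤ b * ι ℤ a * ι ℤ c) * ι ℤ a ∈ I :=
    I.mul_mem_right _ _ hG2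
  have := I.sub_mem (I.sub_mem h1 h2) h3
  convert this using 1
  noncomm_ring
end

section
/- The switchboard ideal I_S contains the ideal I_C. Concretely: each of the generators of I_C, namely u_b²u_a + u_a u_b u_a - u_b u_a u_b - u_b u_a² (a < b), u_b u_c u_a + u_a u_c u_b - u_b u_a u_c - u_c u_a u_b (a < b < c), and u_c u_b u_c u_a + u_b u_c u_a u_c - u_c u_b u_a u_c - u_b u_c² u_a (a < b < c), lies in I_S. -/
open FreeAlgebra

/-- Generators of the switchboard ideal `I_S`. -/
def genS (N : ℕ) : Set (FreeAlgebra ℤ (Fin N)) :=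
  {x | ∃ a b : Fin N, (b : ℕ) = (a : ℕ) + 1 ∧
      x = ι ℤ b * ι ℤ b * ι ℤ a + ι ℤ a * ι ℤ b * ι ℤ a
        - ι ℤ b * ι ℤ a * ι ℤ b - ι ℤ b * ι ℤ a * ι ℤ a} ∪
  {x | ∃ a b : Fin N, (a : ℕ) + 2 ≤ (b : ℕ) ∧
      x = ι ℤ b * ι ℤ b * ι ℤ a - ι ℤ b * ι ℤ a * ι ℤ b} ∪
  {x | ∃ a b : Fin N, (a : ℕ) + 2 ≤ (b : ℕ) ∧
      x = ι ℤ b * ι ℤ a * ι ℤ a - ι ℤ a * ι ℤ b * ι ℤ a} ∪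
  {x | ∃ a b c : Fin N, a < b ∧ b < c ∧
      x = ι ℤ b * ι ℤ c * ι ℤ a + ι ℤ a * ι ℤ c * ι ℤ b
        - ι ℤ b * ι ℤ a * ι ℤ c - ι ℤ c * ι ℤ a * ι ℤ b}

/-- Generators of the ideal `I_C`. -/
def genC (N : ℕ) : Set (FreeAlgebra ℤ (Fin N)) :=
  {x | ∃ a b : Fin N, a < b ∧
      x = ι ℤ b * ι ℤ b * ι ℤ a + ι ℤ a * ι ℤ b * ι ℤ a
        - ι ℤ b * ι ℤ a * ι ℤ b - ι ℤ b * ι ℤ a * ι ℤ a} ∪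
  {x | ∃ a b c : Fin N, a < b ∧ b < c ∧
      x = ι ℤ b * ι ℤ c * ι ℤ a + ι ℤ a * ι ℤ c * ι ℤ b
        - ι ℤ b * ι ℤ a * ι ℤ c - ι ℤ c * ι ℤ a * ι ℤ b} ∪
  {x | ∃ a b c : Fin N, a < b ∧ b < c ∧
      x = ι ℤ c * ι ℤ b * ι ℤ c * ι ℤ a + ι ℤ b * ι ℤ c * ι ℤ a * ι ℤ c
        - ι ℤ c * ι ℤ b * ι ℤ a * ι ℤ c - ι ℤ b * ι ℤ c * ι ℤ c * ι ℤ a}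

/-- The switchboard ideal `I_S` contains `I_C`: every generator of `I_C`
lies in `I_S`, hence `I_C ⊆ I_S`. -/
theorem stmt6 (N : ℕ) :
    (∀ x ∈ genC N, x ∈ TwoSidedIdeal.span (genS N)) ∧
    TwoSidedIdeal.span (genC N) ≤ TwoSidedIdeal.span (genS N) := by
  have main : ∀ x ∈ genC N, x ∈ TwoSidedIdeal.span (genS N) := by
    rintro x (((⟨a, b, hab, rfl⟩ | ⟨a, b, c, hab, hbc, rfl⟩) | ⟨a, b, c, hab, hbc, rfl⟩))
    · -- quadratic generator
      rcases Nat.lt_or_ge ((a : ℕ) + 1) (b : ℕ) with h2 | h1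
      · -- b ≥ a + 2 : combination of two S generators
        have h2' : (a : ℕ) + 2 ≤ (b : ℕ) := h2
        have hs2 : (ι ℤ b * ι ℤ b * ι ℤ a - ι ℤ b * ι ℤ a * ι ℤ b : FreeAlgebra ℤ (Fin N))
            ∈ TwoSidedIdeal.span (genS N) :=
          TwoSidedIdeal.subset_span (Or.inl (Or.inl (Or.inr ⟨a, b, h2', rfl⟩)))
        have hs3 : (ι ℤ b * ι ℤ a * ι ℤ a - ι ℤ a * ι ℤ b * ι ℤ a : FreeAlgebra ℤ (Fin N))
            ∈ TwoSidedIdeal.span (genS N) :=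
          TwoSidedIdeal.subset_span (Or.inl (Or.inr ⟨a, b, h2', rfl⟩))
        have key : (ι ℤ b * ι ℤ b * ι ℤ a + ι ℤ a * ι ℤ b * ι ℤ a
            - ι ℤ b * ι ℤ a * ι ℤ b - ι ℤ b * ι ℤ a * ι ℤ a : FreeAlgebra ℤ (Fin N))
            = (ι ℤ b * ι ℤ b * ι ℤ a - ι ℤ b * ι ℤ a * ι ℤ b)
              - (ι ℤ b * ι ℤ a * ι ℤ a - ι ℤ a * ι ℤ b * ι ℤ a) := by
          noncomm_ring
        rw [key]
        exact (TwoSidedIdeal.span (genS N)).sub_mem hs2 hs3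
      · -- b = a + 1 : directly an S generator
        have hb : (b : ℕ) = (a : ℕ) + 1 := le_antisymm h1 (Fin.lt_iff_val_lt_val.mp hab)
        exact TwoSidedIdeal.subset_span (Or.inl (Or.inl (Or.inl ⟨a, b, hb, rfl⟩)))
    · -- cubic generator: directly an S generator
      exact TwoSidedIdeal.subset_span (Or.inr ⟨a, b, c, hab, hbc, rfl⟩)
    · -- quartic generator
      have hac : (a : ℕ) + 2 ≤ (c : ℕ) := by
        have h1 := Fin.lt_iff_val_lt_val.mp hab
        have h2 := Fin.lt_iff_val_lt_val.mp hbc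
        omega
      set I := TwoSidedIdeal.span (genS N)
      have hg1 : (ι ℤ b * ι ℤ c * ι ℤ a + ι ℤ a * ι ℤ c * ι ℤ b
          - ι ℤ b * ι ℤ a * ι ℤ c - ι ℤ c * ι ℤ a * ι ℤ b : FreeAlgebra ℤ (Fin N)) ∈ I :=
        TwoSidedIdeal.subset_span (Or.inr ⟨a, b, c, hab, hbc, rfl⟩)
      have hs2 : (ι ℤ c * ι ℤ c * ι ℤ a - ι ℤ c * ι ℤ a * ι ℤ c : FreeAlgebra ℤ (Fin N)) ∈ I :=
        TwoSidedIdeal.subset_span (Or.inl (Or.inl (Or.inr ⟨a, c, hac, rfl⟩)))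
      have key : (ι ℤ c * ι ℤ b * ι ℤ c * ι ℤ a + ι ℤ b * ι ℤ c * ι ℤ a * ι ℤ c
          - ι ℤ c * ι ℤ b * ι ℤ a * ι ℤ c - ι ℤ b * ι ℤ c * ι ℤ c * ι ℤ a : FreeAlgebra ℤ (Fin N))
          = ι ℤ c * (ι ℤ b * ι ℤ c * ι ℤ a + ι ℤ a * ι ℤ c * ι ℤ b
              - ι ℤ b * ι ℤ a * ι ℤ c - ι ℤ c * ι ℤ a * ι ℤ b)
            + ((ι ℤ c * ι ℤ c * ι ℤ a - ι ℤ c * ι ℤ a * ι ℤ c) * ι ℤ b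
              - ι ℤ b * (ι ℤ c * ι ℤ c * ι ℤ a - ι ℤ c * ι ℤ a * ι ℤ c)) := by
        noncomm_ring
      rw [key]
      exact I.add_mem (I.mul_mem_left _ _ hg1)
        (I.sub_mem (I.mul_mem_right _ _ hs2) (I.mul_mem_left _ _ hs2))
  refine ⟨main, ?_⟩
  intro x hx
  rw [TwoSidedIdeal.mem_span_iff] at hx
  exact hx _ main
end

section
/- Let v = v_1...v_s be a strictly decreasing word and w = w_1...w_t a strictly increasing word in the alphabet {1,...,N}, and let b satisfy v_1 < b < w_1. Then u_b u_v u_w ≡ u_b u_w u_v modulo the ideal I_B, where u_x denotes the monomial corresponding to word x. -/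
open FreeAlgebra

/-- The monomial `u_w = u_{w_1} ⋯ u_{w_n}` of a word `w`. -/
noncomputable def mon {N : ℕ} (w : List (Fin N)) : FreeAlgebra ℤ (Fin N) :=
  (w.map (ι ℤ)).prod

@[simp] lemma mon_nil {N : ℕ} : mon ([] : List (Fin N)) = 1 := rfl

@[simp] lemma mon_cons {N : ℕ} (a : Fin N) (v : List (Fin N)) :
    mon (a :: v) = ι ℤ a * mon v := by simp [mon]

lemma gen2_mem {N : ℕ} {a b c : Fin N} (hab : a < b) (hbc : b < c) :
    ι ℤ b * ι ℤ c * ι ℤ a - ι ℤ b * ι ℤ a * ι ℤ c ∈ TwoSidedIdeal.span (genB N) :=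
  TwoSidedIdeal.subset_span (Or.inl (Or.inr ⟨a, b, c, hab, hbc, rfl⟩))

lemma lemA {N : ℕ} (b c : Fin N) (hbc : b < c) :
    ∀ v : List (Fin N), v.Pairwise (· > ·) → (∀ x ∈ v, x < b) →
      ι ℤ b * mon v * ι ℤ c - ι ℤ b * ι ℤ c * mon v ∈ TwoSidedIdeal.span (genB N) := by
  intro v
  induction v with
  | nil => intro _ _; simpa using (TwoSidedIdeal.span (genB N)).zero_mem
  | cons a v' ih =>
    intro hp hall
    have ha : a < b := hall a (by simp)
    have hall' : ∀ x ∈ v', x < a := fun x hx => (List.pairwise_cons.1 hp).1 x hx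
    have hIH := lemA a c (ha.trans hbc) v' (List.pairwise_cons.1 hp).2 hall'
    have h1 := (TwoSidedIdeal.span (genB N)).mul_mem_left (ι ℤ b) _ hIH
    have h2 := (TwoSidedIdeal.span (genB N)).mul_mem_right _ (mon v')
      ((TwoSidedIdeal.span (genB N)).neg_mem (gen2_mem ha hbc))
    have h3 := (TwoSidedIdeal.span (genB N)).add_mem h1 h2
    have heq : ι ℤ b * mon (a :: v') * ι ℤ c - ι ℤ b * ι ℤ c * mon (a :: v')
        = ι ℤ b * (ι ℤ a * mon v' * ι ℤ c - ι ℤ a * ι ℤ c * mon v')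
          + -(ι ℤ b * ι ℤ c * ι ℤ a - ι ℤ b * ι ℤ a * ι ℤ c) * mon v' := by
      simp only [mon_cons]; noncomm_ring
    rw [heq]; exact h3

lemma lemB {N : ℕ} :
    ∀ w : List (Fin N), w.Pairwise (· < ·) → ∀ (b : Fin N) (v : List (Fin N)),
      v.Pairwise (· > ·) → (∀ x ∈ v, x < b) → (∀ y ∈ w, b < y) →
      ι ℤ b * mon v * mon w - ι ℤ b * mon w * mon v ∈ TwoSidedIdeal.span (genB N) := by
  intro w
  induction w with
  | nil => intro _ b v _ _ _; simpa using (TwoSidedIdeal.span (genB N)).zero_mem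
  | cons c w' ih =>
    intro hpw b v hpv hall hallw
    have hbc : b < c := hallw c (by simp)
    have hallw' : ∀ y ∈ w', c < y := fun y hy => (List.pairwise_cons.1 hpw).1 y hy
    have hallv' : ∀ x ∈ v, x < c := fun x hx => (hall x hx).trans hbc
    have hA := (TwoSidedIdeal.span (genB N)).mul_mem_right _ (mon w')
      (lemA b c hbc v hpv hall)
    have hI := (TwoSidedIdeal.span (genB N)).mul_mem_left (ι ℤ b) _
      (ih (List.pairwise_cons.1 hpw).2 c v hpv hallv' hallw')
    have h3 := (TwoSidedIdeal.span (genB N)).add_mem hA hI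
    have heq : ι ℤ b * mon v * mon (c :: w') - ι ℤ b * mon (c :: w') * mon v
        = (ι ℤ b * mon v * ι ℤ c - ι ℤ b * ι ℤ c * mon v) * mon w'
          + ι ℤ b * (ι ℤ c * mon v * mon w' - ι ℤ c * mon w' * mon v) := by
      simp only [mon_cons]; noncomm_ring
    rw [heq]; exact h3

/-- If `v` is strictly decreasing, `w` is strictly increasing, and
`v_1 < b < w_1`, then `u_b u_v u_w ≡ u_b u_w u_v (mod I_B)`. -/
theorem stmt8 (N : ℕ) (v w : List (Fin N)) (b : Fin N)
    (hv : v.Chain' (· > ·)) (hw : w.Chain' (· < ·))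
    (hv0 : v ≠ []) (hw0 : w ≠ [])
    (hvb : v.head hv0 < b) (hbw : b < w.head hw0) :
    ι ℤ b * mon v * mon w - ι ℤ b * mon w * mon v ∈ TwoSidedIdeal.span (genB N) := by
  have hpv : v.Pairwise (· > ·) := List.isChain_iff_pairwise.1 hv
  have hpw : w.Pairwise (· < ·) := List.isChain_iff_pairwise.1 hw
  obtain ⟨a, v', rfl⟩ := List.exists_cons_of_ne_nil hv0
  obtain ⟨c, w', rfl⟩ := List.exists_cons_of_ne_nil hw0
  simp only [List.head_cons] at hvb hbw
  refine lemB _ hpw b _ hpv ?_ ?_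
  · intro x hx
    rcases List.mem_cons.1 hx with rfl | hx
    · exact hvb
    · exact ((List.pairwise_cons.1 hpv).1 x hx).trans hvb
  · intro y hy
    rcases List.mem_cons.1 hy with rfl | hy
    · exact hbw
    · exact hbw.trans ((List.pairwise_cons.1 hpw).1 y hy)
end

section
/- Suppose words w and w' of the same length are related by replacing a consecutive factor bac by acb (with a < b < c) in some position. Then inv_k(w) = inv_k(w') for every k with c - a ≤ k, where inv_k counts pairs of positions (i,j) with i < j and 0 < w_i - w_j < k. -/
/-- The `k`-inversion statistic of a word `v`: the number of pairs of positions
`(i,j)` with `i < j` and `0 < v_i - v_j < k`. -/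
def invk (k : ℕ) (v : List ℕ) : ℕ :=
  (Finset.univ.filter (fun p : Fin v.length × Fin v.length =>
    p.1 < p.2 ∧ v.get p.2 < v.get p.1 ∧ v.get p.1 < v.get p.2 + k)).card

/-- The number of letters `y` of `v` inverted with a preceding letter `x`. -/
def cnt (k x : ℕ) (v : List ℕ) : ℕ := v.countP (fun y => decide (y < x ∧ x < y + k))

lemma cnt_eq_sum (k x : ℕ) (t : List ℕ) :
    cnt k x t = ∑ j : Fin t.length, if t.get j < x ∧ x < t.get j + k then 1 else 0 := by
  induction t with
  | nil => simp [cnt]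
  | cons h tl ih =>
      simp [cnt, List.countP_cons, Fin.sum_univ_succ, -Finset.sum_boole,
        Fin.val_succ, List.getElem_cons_succ] at *
      rw [ih]; exact Nat.add_comm _ _

lemma invk_nil (k : ℕ) : invk k [] = 0 := by simp [invk]

lemma invk_cons (k x : ℕ) (t : List ℕ) :
    invk k (x :: t) = cnt k x t + invk k t := by
  rw [invk, invk, Finset.card_filter, Finset.card_filter, Fintype.sum_prod_type,
    Fintype.sum_prod_type, cnt_eq_sum]
  simp [Fin.sum_univ_succ, Fin.succ_lt_succ_iff, -Finset.sum_boole,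
    Fin.val_succ, List.getElem_cons_succ]

lemma cnt_append (k x : ℕ) (u v : List ℕ) :
    cnt k x (u ++ v) = cnt k x u + cnt k x v := by
  simp [cnt, List.countP_append]

/-- Cross inversions between a prefix `u` and a suffix `v`. -/
def cross (k : ℕ) (u v : List ℕ) : ℕ := (u.map (fun x => cnt k x v)).sum

lemma invk_append (k : ℕ) (u v : List ℕ) :
    invk k (u ++ v) = invk k u + invk k v + cross k u v := by
  induction u with
  | nil => simp [invk_nil, cross]
  | cons h t ih =>
      simp only [List.cons_append, invk_cons, ih, cnt_append, cross, List.map_cons,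
        List.sum_cons]
      omega

lemma cnt_perm (k x : ℕ) {v v' : List ℕ} (p : v.Perm v') : cnt k x v = cnt k x v' :=
  p.countP_eq _

lemma cross_perm_left (k : ℕ) {u u' : List ℕ} (v : List ℕ) (p : u.Perm u') :
    cross k u v = cross k u' v :=
  (p.map _).sum_eq

lemma cross_perm_right (k : ℕ) (u : List ℕ) {v v' : List ℕ} (p : v.Perm v') :
    cross k u v = cross k u v' := by
  unfold cross
  congr 1
  exact List.map_congr_left (fun x _ => cnt_perm k x p)

lemma perm_bac {a b c : ℕ} : ([b, a, c] : List ℕ).Perm [a, c, b] :=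
  (List.Perm.swap a b [c]).trans (List.Perm.cons a (List.Perm.swap c b []))

/-- If `w` and `w'` are related by replacing a consecutive factor `bac` by `acb`
(with `a < b < c`), then `inv_k(w) = inv_k(w')` for every `k` with `c - a ≤ k`. -/
theorem stmt9 (k : ℕ) (hk : 0 < k) (y z : List ℕ) (a b c : ℕ)
    (hy : ∀ x ∈ y, 0 < x) (hz : ∀ x ∈ z, 0 < x)
    (ha : 0 < a) (hab : a < b) (hbc : b < c) (hck : c - a ≤ k) :
    invk k (y ++ [b, a, c] ++ z) = invk k (y ++ [a, c, b] ++ z) := by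
  have hbak : b < a + k := by omega
  have hcbk : c < b + k := by omega
  rw [List.append_assoc, List.append_assoc]
  simp only [invk_append]
  rw [cross_perm_left k z perm_bac,
    cross_perm_right k y (perm_bac.append_right z)]
  have h1 : invk k [b, a, c] = invk k [a, c, b] := by
    simp only [invk_cons, invk_nil, cnt, List.countP_cons, List.countP_nil,
      decide_eq_true_eq]
    split_ifs <;> omega
  rw [h1]
end

section
/- Suppose words w and w' of the same length are related by replacing a consecutive factor bac by bca (with a < b < c and c - a > k). Then inv_k(w) = inv_k(w'). -/
lemma invk_aux (k : ℕ) (w w' : List ℕ) (hlen : w.length = w'.length) (u : ℕ)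
    (hu : u + 1 < w.length)
    (hagree : ∀ i (h : i < w.length), i ≠ u → i ≠ u + 1 → w[i] = w'[i]'(hlen ▸ h))
    (hswap1 : w[u]'(Nat.lt_of_succ_lt hu) = w'[u+1]'(hlen ▸ hu))
    (hswap2 : w[u+1]'hu = w'[u]'(hlen ▸ Nat.lt_of_succ_lt hu))
    (hfail : ¬ (w[u+1]'hu < w[u]'(Nat.lt_of_succ_lt hu) ∧
      w[u]'(Nat.lt_of_succ_lt hu) < w[u+1]'hu + k)) :
    invk k w ≤ invk k w' := by
  classical
  unfold invk
  have hτ : ∀ i : Fin w.length,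
      (if (i:ℕ) = u then u+1 else if (i:ℕ) = u+1 then u else (i:ℕ)) < w'.length := by
    intro i
    have := i.isLt
    split_ifs <;> omega
  set g : Fin w.length → Fin w'.length := fun i => ⟨_, hτ i⟩ with hg
  have hval : ∀ i : Fin w.length, w'.get (g i) = w.get i := by
    intro i
    rw [List.get_eq_getElem, List.get_eq_getElem]
    rcases eq_or_ne (i:ℕ) u with h1 | h1
    · have hgi : (if (i:ℕ) = u then u+1 else if (i:ℕ) = u+1 then u else (i:ℕ)) = u + 1 :=
        if_pos h1
      simp only [hg, hgi]
      simp only [h1]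
      exact hswap1.symm
    · rcases eq_or_ne (i:ℕ) (u+1) with h2 | h2
      · have hgi : (if (i:ℕ) = u then u+1 else if (i:ℕ) = u+1 then u else (i:ℕ)) = u := by
          rw [if_neg h1, if_pos h2]
        simp only [hg, hgi]
        simp only [h2]
        exact hswap2.symm
      · have hgi : (if (i:ℕ) = u then u+1 else if (i:ℕ) = u+1 then u else (i:ℕ)) = (i:ℕ) := by
          rw [if_neg h1, if_neg h2]
        simp only [hg, hgi]
        exact (hagree i i.isLt h1 h2).symm
  apply Finset.card_le_card_of_injOn (fun p => (g p.1, g p.2))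
  · intro p hp
    obtain ⟨i, j⟩ := p
    simp only [Finset.coe_filter, Set.mem_setOf_eq, Finset.mem_coe, Finset.mem_filter, Finset.mem_univ, true_and] at hp ⊢
    obtain ⟨hij, hc1, hc2⟩ := hp
    have hne : ¬ ((i:ℕ) = u ∧ (j:ℕ) = u + 1) := by
      rintro ⟨h1, h2⟩
      apply hfail
      have e1 : w.get j = w[u+1]'hu := by rw [List.get_eq_getElem]; congr 1
      have e2 : w.get i = w[u]'(Nat.lt_of_succ_lt hu) := by
        rw [List.get_eq_getElem]; congr 1
      rw [← e1, ← e2]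
      exact ⟨hc1, hc2⟩
    refine ⟨?_, ?_, ?_⟩
    · show g i < g j
      simp only [hg, Fin.mk_lt_mk]
      have hij' : (i:ℕ) < (j:ℕ) := hij
      have hi := i.isLt
      have hj := j.isLt
      by_cases h1 : (i:ℕ) = u <;> by_cases h2 : (j:ℕ) = u + 1 <;>
        split_ifs <;> omega
    · show w'.get (g j) < w'.get (g i)
      rw [hval, hval]; exact hc1
    · show w'.get (g i) < w'.get (g j) + k
      rw [hval, hval]; exact hc2
  · rintro ⟨i, j⟩ - ⟨i', j'⟩ - h
    have hginj : Function.Injective g := by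
      intro x y hxy
      simp only [hg, Fin.mk.injEq] at hxy
      have := x.isLt; have := y.isLt
      apply Fin.ext
      split_ifs at hxy <;> omega
    simp only [Prod.mk.injEq] at h
    exact Prod.ext (hginj h.1) (hginj h.2)

lemma getE1 (y z : List ℕ) (b a c : ℕ) (h : y.length + 1 < (y ++ [b,a,c] ++ z).length) :
    (y ++ [b,a,c] ++ z)[y.length + 1] = a := by
  have e : y ++ [b,a,c] ++ z = y ++ (b :: a :: c :: z) := by simp
  simp only [e]
  rw [List.getElem_append_right (by omega)]
  simp

lemma getE2 (y z : List ℕ) (b a c : ℕ) (h : y.length + 1 + 1 < (y ++ [b,a,c] ++ z).length) :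
    (y ++ [b,a,c] ++ z)[y.length + 1 + 1] = c := by
  have e : y ++ [b,a,c] ++ z = y ++ (b :: a :: c :: z) := by simp
  simp only [e]
  rw [List.getElem_append_right (by omega)]
  have e2 : y.length + 1 + 1 - y.length = 2 := by omega
  simp [e2]

lemma getAgree (y z : List ℕ) (b a c a' c' : ℕ) (i : ℕ) (h : i < (y ++ [b,a,c] ++ z).length)
    (h' : i < (y ++ [b,c',a'] ++ z).length)
    (h1 : i ≠ y.length + 1) (h2 : i ≠ y.length + 2) :
    (y ++ [b,a,c] ++ z)[i] = (y ++ [b,c',a'] ++ z)[i] := by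
  have e : y ++ [b,a,c] ++ z = y ++ (b :: a :: c :: z) := by simp
  have e' : y ++ [b,c',a'] ++ z = y ++ (b :: c' :: a' :: z) := by simp
  simp only [e, e']
  rw [List.getElem_append, List.getElem_append]
  split_ifs with hi
  · rfl
  · rw [List.getElem_cons, List.getElem_cons]
    split_ifs with hj
    · rfl
    · rw [List.getElem_cons, List.getElem_cons]
      have h3 : i - y.length - 1 ≠ 0 := by omega
      have h4 : i - y.length - 1 - 1 ≠ 0 := by omega
      rw [dif_neg h3, dif_neg h3, List.getElem_cons, List.getElem_cons, dif_neg h4, dif_neg h4]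

/-- If `w` and `w'` are related by replacing a consecutive factor `bac` by `bca`
(with `a < b < c` and `c - a > k`), then `inv_k(w) = inv_k(w')`. -/
theorem stmt10 (k : ℕ) (hk : 0 < k) (y z : List ℕ) (a b c : ℕ)
    (hy : ∀ x ∈ y, 0 < x) (hz : ∀ x ∈ z, 0 < x)
    (ha : 0 < a) (hab : a < b) (hbc : b < c) (hck : k < c - a) :
    invk k (y ++ [b, a, c] ++ z) = invk k (y ++ [b, c, a] ++ z) := by
  have hlw : (y ++ [b, a, c] ++ z).length = y.length + 3 + z.length := by
    simp only [List.length_append, List.length_cons, List.length_nil]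
  have hlw' : (y ++ [b, c, a] ++ z).length = y.length + 3 + z.length := by
    simp only [List.length_append, List.length_cons, List.length_nil]
  have hlen : (y ++ [b, a, c] ++ z).length = (y ++ [b, c, a] ++ z).length := by omega
  have hlen' := hlen.symm
  have hu : y.length + 1 + 1 < (y ++ [b, a, c] ++ z).length := by omega
  have hu' : y.length + 1 + 1 < (y ++ [b, c, a] ++ z).length := by omega
  have hac : a + k < c := by omega
  apply le_antisymm
  · apply invk_aux k _ _ hlen (y.length + 1) hu
    · intro i h h1 h2
      exact getAgree y z b a c a c i h (hlen ▸ h) h1 (by omega)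
    · rw [getE1 y z b a c (Nat.lt_of_succ_lt hu)]
      rw [getE2 y z b c a (hlen ▸ hu)]
    · rw [getE2 y z b a c hu]
      rw [getE1 y z b c a (hlen ▸ Nat.lt_of_succ_lt hu)]
    · rw [getE2 y z b a c hu, getE1 y z b a c (Nat.lt_of_succ_lt hu)]
      rintro ⟨h1, -⟩; omega
  · apply invk_aux k _ _ hlen' (y.length + 1) hu'
    · intro i h h1 h2
      exact getAgree y z b c a c a i h (hlen' ▸ h) h1 (by omega)
    · rw [getE1 y z b c a (Nat.lt_of_succ_lt hu'), getE2 y z b a c (hlen' ▸ hu')]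
    · rw [getE2 y z b c a hu', getE1 y z b a c (hlen' ▸ Nat.lt_of_succ_lt hu')]
    · rw [getE2 y z b c a hu', getE1 y z b c a (Nat.lt_of_succ_lt hu')]
      rintro ⟨-, h2⟩; omega
end

section
/- Let I be a homogeneous two-sided ideal in U = Z⟨u_1,...,u_N⟩ and let J be a homogeneous element of degree d. Then the following are equivalent: (a) some positive integer multiple of J is congruent modulo I to a nonnegative integer combination of monomials; (b) for every element γ of the dual space U* which is a nonnegative integer combination of words and annihilates I_d (the degree-d part of I), the pairing ⟨J, γ⟩ is nonnegative. -/
/-- We model `U = ℤ⟨u_1,…,u_N⟩` as the monoid algebra of the free monoid of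
words in the alphabet `{1,…,N}`; its elements are finitely supported
`ℤ`-valued coefficient functions on words. -/
abbrev FreeRing' (N : ℕ) := MonoidAlgebra ℤ (FreeMonoid (Fin N))

/-- The degree-`d` homogeneous projection: keep only coefficients of words of length `d`. -/
noncomputable def proj (N d : ℕ) (x : FreeRing' N) : FreeRing' N :=
  MonoidAlgebra.ofCoeff <| Finsupp.filter (fun w : FreeMonoid (Fin N) => (FreeMonoid.toList w).length = d) x.coeff

namespace Stmt13Aux

variable {W : Type*} [Fintype W]

/-- dot product on `W → ℚ`. -/
def dotq (x y : W → ℚ) : ℚ := ∑ w, x w * y w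

lemma dotq_sub_smul (a b : W → ℚ) (r : ℚ) (y : W → ℚ) :
    dotq (a - r • b) y = dotq a y - r * dotq b y := by
  simp [dotq, sub_mul, Finset.sum_sub_distrib, Finset.mul_sum, mul_assoc]

lemma dotq_sub_smul_right (x a : W → ℚ) (r : ℚ) (b : W → ℚ) :
    dotq x (a - r • b) = dotq x a - r * dotq x b := by
  have h : ∀ w, x w * (a w - r * b w) = x w * a w - r * (x w * b w) := fun w => by ring
  simp [dotq, h, Finset.sum_sub_distrib, Finset.mul_sum]

lemma dotq_self_nonneg (x : W → ℚ) : 0 ≤ dotq x x :=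
  Finset.sum_nonneg fun _ _ => mul_self_nonneg _

lemma dotq_neg_right (x y : W → ℚ) : dotq x (-y) = - dotq x y := by
  simp [dotq, Finset.sum_neg_distrib]

lemma dotq_neg_left (x y : W → ℚ) : dotq (-x) y = - dotq x y := by
  simp [dotq, Finset.sum_neg_distrib]

lemma dotq_single [DecidableEq W] (v : W) (γ : W → ℚ) :
    dotq (Pi.single v 1) γ = γ v := by
  simp [dotq, Pi.single_apply]

/-- The linear functional `x ↦ ⟨x, γ⟩`. -/
def dotL (γ : W → ℚ) : (W → ℚ) →ₗ[ℚ] ℚ where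
  toFun x := dotq x γ
  map_add' x y := by simp [dotq, add_mul, Finset.sum_add_distrib]
  map_smul' r x := by simp [dotq, Finset.mul_sum, mul_assoc]

/-- Farkas' lemma over `ℚ` for finitely many generators, indexed by `Fin n`. -/
theorem farkas : ∀ (n : ℕ) (g : Fin n → (W → ℚ)) (J : W → ℚ),
    (∀ γ : W → ℚ, (∀ i, 0 ≤ dotq (g i) γ) → 0 ≤ dotq J γ) →
    ∃ c : Fin n → ℚ, (∀ i, 0 ≤ c i) ∧ ∑ i, c i • g i = J := by
  intro n
  induction n with
  | zero =>
    intro g J hyp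
    refine ⟨Fin.elim0, fun i => i.elim0, ?_⟩
    have h1 : 0 ≤ dotq J (-J) := hyp (-J) (fun i => i.elim0)
    rw [dotq_neg_right] at h1
    have h2 : dotq J J = 0 := le_antisymm (by linarith) (dotq_self_nonneg J)
    have hJ : J = 0 := by
      funext w
      simp only [Pi.zero_apply]
      by_contra hw
      have : 0 < dotq J J := by
        have : 0 < J w * J w := mul_self_pos.2 hw
        exact Finset.sum_pos' (fun v _ => mul_self_nonneg _) ⟨w, Finset.mem_univ w, this⟩
      exact absurd h2 (ne_of_gt this)
    simp [hJ]
  | succ n ih =>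
    intro g J hyp
    by_cases htail : ∀ γ : W → ℚ, (∀ i : Fin n, 0 ≤ dotq (g i.succ) γ) → 0 ≤ dotq J γ
    · obtain ⟨c, hc, hsum⟩ := ih (fun i => g i.succ) J htail
      refine ⟨Fin.cases 0 c, ?_, ?_⟩
      · intro i; induction i using Fin.cases with
        | zero => simp
        | succ i => simpa using hc i
      · rw [Fin.sum_univ_succ]; simpa using hsum
    · push_neg at htail
      obtain ⟨γ₀, hγ₀, hJγ₀⟩ := htail
      have hg0 : dotq (g 0) γ₀ < 0 := by
        by_contra h
        push_neg at h
        refine absurd (hyp γ₀ ?_) (not_le.2 hJγ₀)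
        intro i
        induction i using Fin.cases with
        | zero => exact h
        | succ i => exact hγ₀ i
      set D := dotq (g 0) γ₀ with hD
      set lam := dotq J γ₀ / D with hlam
      have hlampos : 0 < lam := div_pos_of_neg_of_neg hJγ₀ hg0
      set g' : Fin n → (W → ℚ) := fun i => g i.succ - (dotq (g i.succ) γ₀ / D) • g 0 with hg'
      set J' : W → ℚ := J - lam • g 0 with hJ'
      have key : ∀ γ : W → ℚ, (∀ i : Fin n, 0 ≤ dotq (g' i) γ) → 0 ≤ dotq J' γ := by
        intro γ hγ
        set γ' : W → ℚ := γ - (dotq (g 0) γ / D) • γ₀ with hγ'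
        have hdot : ∀ x : W → ℚ, dotq x γ' = dotq x γ - (dotq (g 0) γ / D) * dotq x γ₀ := by
          intro x
          rw [hγ', dotq_sub_smul_right]
        have h0 : dotq (g 0) γ' = 0 := by
          rw [hdot, ← hD, div_mul_cancel₀ _ (ne_of_lt hg0), sub_self]
        have hsuccs : ∀ i : Fin n, dotq (g i.succ) γ' = dotq (g' i) γ := by
          intro i
          rw [hdot, hg']
          simp only [dotq_sub_smul]
          ring
        have hJeq : dotq J γ' = dotq J' γ := by
          rw [hdot, hJ', dotq_sub_smul, hlam]
          ring
        have := hyp γ' ?_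
        · rw [hJeq] at this; exact this
        · intro i
          induction i using Fin.cases with
          | zero => rw [h0]
          | succ i => rw [hsuccs i]; exact hγ i
      obtain ⟨c, hc, hsum⟩ := ih g' J' key
      refine ⟨Fin.cases (lam - ∑ i, c i * (dotq (g i.succ) γ₀ / D)) c, ?_, ?_⟩
      · intro i
        induction i using Fin.cases with
        | zero =>
          simp only [Fin.cases_zero]
          have : ∀ i, c i * (dotq (g i.succ) γ₀ / D) ≤ 0 := by
            intro i
            exact mul_nonpos_of_nonneg_of_nonpos (hc i)
              (div_nonpos_of_nonneg_of_nonpos (hγ₀ i) (le_of_lt hg0))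
          have hsumle : ∑ i, c i * (dotq (g i.succ) γ₀ / D) ≤ 0 :=
            Finset.sum_nonpos (fun i _ => this i)
          linarith
        | succ i => simpa using hc i
      · rw [Fin.sum_univ_succ]
        simp only [Fin.cases_zero, Fin.cases_succ]
        have : ∑ i : Fin n, c i • g i.succ
            = J' + (∑ i, c i * (dotq (g i.succ) γ₀ / D)) • g 0 := by
          rw [← hsum, Finset.sum_smul, ← Finset.sum_add_distrib]
          congr 1
          funext i
          rw [hg', smul_sub, smul_smul]
          abel
        rw [this, hJ', sub_smul]
        abel

/-- Farkas' lemma for an arbitrary finite index type. -/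
theorem farkasFintype {ι : Type*} [Fintype ι] (g : ι → (W → ℚ)) (J : W → ℚ)
    (hyp : ∀ γ : W → ℚ, (∀ i, 0 ≤ dotq (g i) γ) → 0 ≤ dotq J γ) :
    ∃ c : ι → ℚ, (∀ i, 0 ≤ c i) ∧ ∑ i, c i • g i = J := by
  let e := Fintype.equivFin ι
  obtain ⟨c, hc, hsum⟩ := farkas (Fintype.card ι) (g ∘ e.symm) J
    (fun γ hγ => hyp γ (fun i => by simpa using hγ (e i)))
  refine ⟨c ∘ e, fun i => hc (e i), ?_⟩
  rw [← hsum, ← Equiv.sum_comp e (fun j => c j • (g ∘ e.symm) j)]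
  simp

/-- A common multiple of denominators turns rationals into integers. -/
lemma int_of_den_dvd (q : ℚ) {m : ℕ} (h : q.den ∣ m) : ∃ k : ℤ, (m : ℚ) * q = (k : ℚ) := by
  obtain ⟨t, ht⟩ := h
  refine ⟨(t : ℤ) * q.num, ?_⟩
  have h0 : ((q.den : ℚ)) ≠ 0 := by
    exact_mod_cast q.den_nz
  have h2 : q * (q.den : ℚ) = (q.num : ℚ) := (eq_div_iff h0).mp (Rat.num_div_den q).symm
  rw [ht]
  push_cast
  linear_combination (t : ℚ) * h2

lemma exists_common_den {ι : Type*} [Fintype ι] (q : ι → ℚ) :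
    ∃ m : ℕ, 0 < m ∧ ∀ i, ∃ k : ℤ, (m : ℚ) * q i = (k : ℚ) := by
  refine ⟨∏ i, (q i).den, Finset.prod_pos (fun i _ => (q i).pos), fun i => ?_⟩
  exact int_of_den_dvd _ (Finset.dvd_prod_of_mem (fun i => (q i).den) (Finset.mem_univ i))

/-- The word of length `d` associated to a vector. -/
def wrd (N d : ℕ) (v : List.Vector (Fin N) d) : FreeMonoid (Fin N) :=
  FreeMonoid.ofList v.toList

lemma wrd_injective (N d : ℕ) : Function.Injective (wrd N d) := fun a b h =>
  List.Vector.toList_injective (congrArg FreeMonoid.toList h)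

lemma wrd_toList {N d : ℕ} (u : FreeMonoid (Fin N)) (h : (FreeMonoid.toList u).length = d) :
    wrd N d ⟨FreeMonoid.toList u, h⟩ = u := rfl

/-- restriction of a noncommutative polynomial to its degree-`d` coefficients, over `ℚ`. -/
def res (N d : ℕ) (z : FreeRing' N) : List.Vector (Fin N) d → ℚ :=
  fun v => ((z.coeff (wrd N d v) : ℤ) : ℚ)

/-- Reindex a support sum over a degree-`d` homogeneous element as a sum over all
length-`d` words. -/
lemma sum_support_eq (N d : ℕ) (z : FreeRing' N)
    (hz : ∀ w ∈ z.coeff.support, (FreeMonoid.toList w).length = d) (f : FreeMonoid (Fin N) → ℤ) :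
    ∑ w ∈ z.coeff.support, z.coeff w * f w
      = ∑ v : List.Vector (Fin N) d, z.coeff (wrd N d v) * f (wrd N d v) := by
  classical
  have h1 : ∑ u ∈ Finset.univ.image (wrd N d), z.coeff u * f u
      = ∑ v : List.Vector (Fin N) d, z.coeff (wrd N d v) * f (wrd N d v) :=
    Finset.sum_image (fun x _ y _ h => wrd_injective N d h)
  rw [← h1]
  refine Finset.sum_subset ?_ ?_
  · intro u hu
    exact Finset.mem_image.2 ⟨⟨FreeMonoid.toList u, hz u hu⟩, Finset.mem_univ _, wrd_toList u _⟩
  · intro u _ hu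
    rw [Finsupp.notMem_support_iff.mp hu, zero_mul]

end Stmt13Aux

open Stmt13Aux


/-- For a homogeneous two-sided ideal `I` and a homogeneous element `J` of degree `d`,
the following are equivalent: (a) some positive integer multiple of `J` is congruent
mod `I` to a nonnegative integer combination of monomials; (b) for every nonnegative
integer combination of words `γ ∈ U*` annihilating the degree-`d` part of `I`, the
pairing `⟨J, γ⟩` is nonnegative. -/
theorem stmt13 (N d : ℕ) (I : TwoSidedIdeal (FreeRing' N))
    (hIhom : ∀ x ∈ I, ∀ e : ℕ, proj N e x ∈ I)
    (J : FreeRing' N) (hJhom : ∀ w ∈ J.coeff.support, (FreeMonoid.toList w).length = d) :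
    (∃ c : ℕ, 0 < c ∧ ∃ p : FreeRing' N, (∀ w, 0 ≤ p.coeff w) ∧ (c : ℤ) • J - p ∈ I) ↔
    (∀ γ : FreeMonoid (Fin N) →₀ ℤ, (∀ w, 0 ≤ γ w) →
      (∀ z ∈ I, (∀ w ∈ z.coeff.support, (FreeMonoid.toList w).length = d) →
        ∑ w ∈ z.coeff.support, z.coeff w * γ w = 0) →
      0 ≤ ∑ w ∈ J.coeff.support, J.coeff w * γ w) := by
  classical
  constructor
  · -- (a) → (b)
    rintro ⟨c, hc, p, hp, hmem⟩ γ hγ hγI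
    set T : (FreeMonoid (Fin N) →₀ ℤ) →ₗ[ℤ] ℤ :=
      Finsupp.linearCombination ℤ (fun w => (γ w : ℤ)) with hT
    have hTval : ∀ z : FreeRing' N, T z.coeff = ∑ w ∈ z.coeff.support, z.coeff w * γ w := by
      intro z
      simp [hT, Finsupp.linearCombination_apply, Finsupp.sum, smul_eq_mul]
    set q : FreeRing' N := proj N d ((c : ℤ) • J - p) with hq
    have hqI : q ∈ I := hIhom _ hmem d
    have hqsupp : ∀ w ∈ q.coeff.support, (FreeMonoid.toList w).length = d := by
      intro w hw
      rw [hq] at hw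
      unfold proj at hw
      rw [MonoidAlgebra.coeff_ofCoeff, Finsupp.support_filter, Finset.mem_filter] at hw
      exact hw.2
    have hq0 : T q.coeff = 0 := by rw [hTval]; exact hγI q hqI hqsupp
    have hqdecomp : q = (c : ℤ) • J - proj N d p := by
      ext w
      rw [hq]
      unfold proj
      by_cases h : (FreeMonoid.toList w).length = d
      · rw [MonoidAlgebra.coeff_ofCoeff, Finsupp.filter_apply, if_pos h, MonoidAlgebra.coeff_sub,
          MonoidAlgebra.coeff_sub, Finsupp.sub_apply, Finsupp.sub_apply, MonoidAlgebra.coeff_ofCoeff,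
          Finsupp.filter_apply, if_pos h]
      · have hJw : J.coeff w = 0 := by
          by_contra hne
          exact h (hJhom w (Finsupp.mem_support_iff.2 hne))
        rw [MonoidAlgebra.coeff_ofCoeff, Finsupp.filter_apply, if_neg h, MonoidAlgebra.coeff_sub,
          Finsupp.sub_apply, MonoidAlgebra.coeff_ofCoeff, Finsupp.filter_apply, if_neg h,
          MonoidAlgebra.coeff_smul, Finsupp.smul_apply, hJw, smul_zero, sub_zero]
    have hTp : 0 ≤ T (proj N d p).coeff := by
      rw [hTval]
      refine Finset.sum_nonneg fun w hw => ?_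
      have hwd : (FreeMonoid.toList w).length = d := by
        unfold proj at hw
        rw [MonoidAlgebra.coeff_ofCoeff, Finsupp.support_filter, Finset.mem_filter] at hw
        exact hw.2
      have hval : (proj N d p).coeff w = p.coeff w := by
        unfold proj
        rw [MonoidAlgebra.coeff_ofCoeff, Finsupp.filter_apply, if_pos hwd]
      rw [hval]
      exact mul_nonneg (hp w) (hγ w)
    have hkey : (c : ℤ) * T J.coeff = T (proj N d p).coeff := by
      have h' := hq0
      rw [hqdecomp, MonoidAlgebra.coeff_sub, MonoidAlgebra.coeff_smul, map_sub, map_smul, smul_eq_mul] at h'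
      linarith
    have hnn : 0 ≤ (c : ℤ) * T J.coeff := hkey ▸ hTp
    have hc' : (0 : ℤ) < (c : ℤ) := by exact_mod_cast hc
    have hTJ : 0 ≤ T J.coeff := by
      by_contra hlt
      push_neg at hlt
      have : (c : ℤ) * T J.coeff < 0 := mul_neg_of_pos_of_neg hc' hlt
      linarith
    rwa [hTval] at hTJ
  · -- (b) → (a)
    intro hb
    set X : Set (List.Vector (Fin N) d → ℚ) :=
      (res N d) '' {z : FreeRing' N | z ∈ I ∧ ∀ w ∈ z.coeff.support, (FreeMonoid.toList w).length = d}
      with hX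
    obtain ⟨b, hbX, hbspan, hbli⟩ := exists_linearIndependent ℚ X
    have hbfin : b.Finite := hbli.setFinite
    set bs : Finset (List.Vector (Fin N) d → ℚ) := hbfin.toFinset with hbs
    have hpre : ∀ x ∈ bs, ∃ z : FreeRing' N,
        (z ∈ I ∧ ∀ w ∈ z.coeff.support, (FreeMonoid.toList w).length = d) ∧ res N d z = x := by
      intro x hx
      have hx' := hbX (hbfin.mem_toFinset.mp hx)
      rw [hX] at hx'
      obtain ⟨z, hz, hzres⟩ := hx'
      exact ⟨z, hz, hzres⟩
    choose! Z hZmem hZres using hpre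
    set g : ((↥bs ⊕ ↥bs) ⊕ List.Vector (Fin N) d) → (List.Vector (Fin N) d → ℚ) := fun i =>
      Sum.elim (Sum.elim (fun x : ↥bs => (x : List.Vector (Fin N) d → ℚ))
        (fun x : ↥bs => -(x : List.Vector (Fin N) d → ℚ)))
        (fun v => Pi.single v 1) i with hg
    have hyp : ∀ γ : List.Vector (Fin N) d → ℚ,
        (∀ i, 0 ≤ dotq (g i) γ) → 0 ≤ dotq (res N d J) γ := by
      intro γ hγ
      have hpos : ∀ v, 0 ≤ γ v := by
        intro v
        have h' := hγ (Sum.inr v)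
        simp only [hg, Sum.elim_inr, dotq_single] at h'
        exact h'
      have hzero : ∀ x ∈ bs, dotq x γ = 0 := by
        intro x hx
        have h1 := hγ (Sum.inl (Sum.inl ⟨x, hx⟩))
        have h2 := hγ (Sum.inl (Sum.inr ⟨x, hx⟩))
        simp only [hg, Sum.elim_inl, Sum.elim_inr] at h1 h2
        rw [dotq_neg_left] at h2
        linarith
      have hann : ∀ z : FreeRing' N, z ∈ I →
          (∀ w ∈ z.coeff.support, (FreeMonoid.toList w).length = d) → dotq (res N d z) γ = 0 := by
        intro z hz hzh
        have hmem : res N d z ∈ Submodule.span ℚ b := by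
          rw [hbspan]
          exact Submodule.subset_span ⟨z, ⟨hz, hzh⟩, rfl⟩
        have hle : Submodule.span ℚ b ≤ LinearMap.ker (dotL γ) := by
          refine Submodule.span_le.2 fun x hx => ?_
          rw [SetLike.mem_coe, LinearMap.mem_ker]
          exact hzero x (hbfin.mem_toFinset.2 hx)
        exact hle hmem
      obtain ⟨m, hmpos, hmk⟩ := exists_common_den γ
      choose ee hee using hmk
      set f : FreeMonoid (Fin N) → ℤ := fun u =>
        if h : (FreeMonoid.toList u).length = d then ee ⟨FreeMonoid.toList u, h⟩ else 0 with hf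
      set γt : FreeMonoid (Fin N) →₀ ℤ := Finsupp.onFinset (Finset.univ.image (wrd N d)) f
        (by
          intro u hu
          by_cases h : (FreeMonoid.toList u).length = d
          · exact Finset.mem_image.2 ⟨⟨FreeMonoid.toList u, h⟩, Finset.mem_univ _, wrd_toList u h⟩
          · exact absurd (by simp [hf, h]) hu) with hγt
      have hγtval : ∀ v, γt (wrd N d v) = ee v := by
        rintro ⟨l, hl⟩
        simp only [hγt, Finsupp.onFinset_apply, hf, wrd, FreeMonoid.toList_ofList,
          List.Vector.toList_mk]
        exact dif_pos hl
      have hγtnn : ∀ w, 0 ≤ γt w := by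
        intro u
        simp only [hγt, Finsupp.onFinset_apply, hf]
        by_cases h : (FreeMonoid.toList u).length = d
        · rw [dif_pos h]
          have h' := hee ⟨FreeMonoid.toList u, h⟩
          have hnn : (0 : ℚ) ≤ (m : ℚ) * γ ⟨FreeMonoid.toList u, h⟩ :=
            mul_nonneg (by positivity) (hpos _)
          rw [h'] at hnn
          exact_mod_cast hnn
        · rw [dif_neg h]
      have hsumid : ∀ z : FreeRing' N, (∀ w ∈ z.coeff.support, (FreeMonoid.toList w).length = d) →
          ((∑ w ∈ z.coeff.support, z.coeff w * γt w : ℤ) : ℚ) = (m : ℚ) * dotq (res N d z) γ := by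
        intro z hzh
        rw [sum_support_eq N d z hzh (fun w => γt w), dotq, Finset.mul_sum]
        push_cast
        refine Finset.sum_congr rfl fun v _ => ?_
        rw [hγtval v, ← hee v]
        simp only [res]
        ring
      have hann2 : ∀ z ∈ I, (∀ w ∈ z.coeff.support, (FreeMonoid.toList w).length = d) →
          ∑ w ∈ z.coeff.support, z.coeff w * γt w = 0 := by
        intro z hz hzh
        have h' := hsumid z hzh
        rw [hann z hz hzh, mul_zero] at h'
        exact_mod_cast h'
      have hfinal := hb γt hγtnn hann2
      have hJid := hsumid J hJhom
      have hcast : (0 : ℚ) ≤ (m : ℚ) * dotq (res N d J) γ := by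
        rw [← hJid]
        exact_mod_cast hfinal
      have hmpos' : (0 : ℚ) < (m : ℚ) := by exact_mod_cast hmpos
      nlinarith [hcast, hmpos']
    obtain ⟨c, hcnn, hcsum⟩ := farkasFintype g (res N d J) hyp
    set qc : ↥bs → ℚ := fun x => c (Sum.inl (Sum.inl x)) - c (Sum.inl (Sum.inr x)) with hqc
    have hconc : ∀ v, ∑ x : ↥bs, qc x * (x : List.Vector (Fin N) d → ℚ) v + c (Sum.inr v)
        = res N d J v := by
      intro v
      have hv := congrFun hcsum v
      rw [Finset.sum_apply, Fintype.sum_sum_type, Fintype.sum_sum_type] at hv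
      simp only [hg, Sum.elim_inl, Sum.elim_inr, Pi.smul_apply, smul_eq_mul, Pi.neg_apply,
        Pi.single_apply, mul_neg, mul_ite, mul_one, mul_zero] at hv
      rw [Finset.sum_neg_distrib, Finset.sum_ite_eq] at hv
      simp only [Finset.mem_univ, if_true] at hv
      rw [← hv]
      have hsplit : ∑ x : ↥bs, qc x * (x : List.Vector (Fin N) d → ℚ) v
          = (∑ x : ↥bs, c (Sum.inl (Sum.inl x)) * (x : List.Vector (Fin N) d → ℚ) v)
            - ∑ x : ↥bs, c (Sum.inl (Sum.inr x)) * (x : List.Vector (Fin N) d → ℚ) v := by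
        rw [← Finset.sum_sub_distrib]
        refine Finset.sum_congr rfl fun x _ => ?_
        simp only [hqc]
        ring
      rw [hsplit]
      ring
    obtain ⟨M, hMpos, hMk⟩ := exists_common_den qc
    choose mi hmi using hMk
    set S : FreeRing' N := ∑ x : ↥bs, mi x • Z (x : List.Vector (Fin N) d → ℚ) with hS
    have hSI : S ∈ I :=
      sum_mem fun x _ => zsmul_mem ((hZmem _ x.2).1) (mi x)
    refine ⟨M, hMpos, (M : ℤ) • J - S, ?_, ?_⟩
    · intro w
      have hSw : S.coeff w = ∑ x : ↥bs, mi x * (Z (x : List.Vector (Fin N) d → ℚ)).coeff w := by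
        rw [hS, MonoidAlgebra.coeff_sum, Finsupp.finset_sum_apply]
        exact Finset.sum_congr rfl fun x _ => by
          rw [MonoidAlgebra.coeff_smul, Finsupp.smul_apply, smul_eq_mul]
      rw [MonoidAlgebra.coeff_sub, Finsupp.sub_apply, MonoidAlgebra.coeff_smul, Finsupp.smul_apply,
        smul_eq_mul, hSw]
      by_cases h : (FreeMonoid.toList w).length = d
      · set v : List.Vector (Fin N) d := ⟨FreeMonoid.toList w, h⟩ with hv
        have hwv : wrd N d v = w := wrd_toList w h
        have hQ : (((M : ℤ) * J.coeff w - ∑ x : ↥bs, mi x * (Z (x : List.Vector (Fin N) d → ℚ)).coeff w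
            : ℤ) : ℚ) = (M : ℚ) * c (Sum.inr v) := by
          push_cast
          have h1 : ((J.coeff w : ℤ) : ℚ) = res N d J v := by rw [res, hwv]
          have h2 : ∀ x : ↥bs, (((Z (x : List.Vector (Fin N) d → ℚ)).coeff w : ℤ) : ℚ)
              = (x : List.Vector (Fin N) d → ℚ) v := by
            intro x
            have hres := hZres _ x.2
            calc (((Z (x : List.Vector (Fin N) d → ℚ)).coeff w : ℤ) : ℚ)
                = res N d (Z (x : List.Vector (Fin N) d → ℚ)) v := by rw [res, hwv]
              _ = (x : List.Vector (Fin N) d → ℚ) v := by rw [hres]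
          rw [h1]
          rw [Finset.sum_congr rfl fun x _ => by rw [h2 x, ← hmi x]]
          have hcv := hconc v
          rw [Finset.sum_congr rfl (fun x (_ : x ∈ Finset.univ) =>
            show (M : ℚ) * qc x * (x : List.Vector (Fin N) d → ℚ) v
              = (M : ℚ) * (qc x * (x : List.Vector (Fin N) d → ℚ) v) from by ring),
            ← Finset.mul_sum]
          linear_combination (-(M : ℚ)) * hcv
        have : (0 : ℚ) ≤ (M : ℚ) * c (Sum.inr v) :=
          mul_nonneg (by positivity) (hcnn (Sum.inr v))
        rw [← hQ] at this
        exact_mod_cast this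
      · have hJw : J.coeff w = 0 := by
          by_contra hne
          exact h (hJhom w (Finsupp.mem_support_iff.2 hne))
        have hZw : ∀ x : ↥bs, (Z (x : List.Vector (Fin N) d → ℚ)).coeff w = 0 := by
          intro x
          by_contra hne
          exact h ((hZmem _ x.2).2 w (Finsupp.mem_support_iff.2 hne))
        rw [hJw, mul_zero]
        rw [Finset.sum_congr rfl fun x _ => by rw [hZw x, mul_zero]]
        simp
    · rw [sub_sub_cancel]
      exact hSI
end
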